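/- Let φ be a cyclic 2n-cochain on an algebra A (i.e. λφ = φ) that is a coboundary, φ = bψ with ψ a cyclic (2n-1)-cochain. Then for every idempotent e ∈ A, φ(e, e, ..., e) = 0. -/
import Mathlib


/-- The Hochschild coboundary of an `n`-cochain (a ℂ-valued function of `n+1`
algebra variables):
`(bφ)(a₀,…,aₙ₊₁) = Σᵢ₌₀ⁿ (-1)ⁱ φ(a₀,…,aᵢaᵢ₊₁,…,aₙ₊₁) + (-1)ⁿ⁺¹ φ(aₙ₊₁a₀,a₁,…,aₙ)`. -/
noncomputable def hochschildB {A : Type*} [Ring A] (n : ℕ) (φ : (Fin (n + 1) → A) → ℂ) :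
    (Fin (n + 2) → A) → ℂ :=
  fun a =>
    (∑ i : Fin (n + 1), (-1 : ℂ) ^ (i : ℕ) *
      φ (fun j => if (j : ℕ) < (i : ℕ) then a j.castSucc
          else if (j : ℕ) = (i : ℕ) then a j.castSucc * a j.succ else a j.succ)) +
    (-1 : ℂ) ^ (n + 1) *
      φ (fun j => if (j : ℕ) = 0 then a (Fin.last (n + 1)) * a 0 else a j.castSucc)

/-- The operator `b'` (the Hochschild coboundary without the wraparound term). -/
noncomputable def hochschildB' {A : Type*} [Ring A] (n : ℕ) (φ : (Fin (n + 1) → A) → ℂ) :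
    (Fin (n + 2) → A) → ℂ :=
  fun a =>
    ∑ i : Fin (n + 1), (-1 : ℂ) ^ (i : ℕ) *
      φ (fun j => if (j : ℕ) < (i : ℕ) then a j.castSucc
          else if (j : ℕ) = (i : ℕ) then a j.castSucc * a j.succ else a j.succ)

/-- The cyclic permutation operator `(λφ)(a₀,…,aₙ) = (-1)ⁿ φ(aₙ,a₀,…,aₙ₋₁)`. -/
noncomputable def cyclicLambda {A : Type*} [Ring A] (n : ℕ) (φ : (Fin (n + 1) → A) → ℂ) :
    (Fin (n + 1) → A) → ℂ :=
  fun a => (-1 : ℂ) ^ n * φ (fun j => a (j - 1))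

/-- A cyclic `2n`-cochain `φ` which is the coboundary `φ = bψ` of a cyclic
`(2n-1)`-cochain `ψ` vanishes on any idempotent: `φ(e,e,…,e) = 0`. -/
theorem cyclic_coboundary_vanishes_on_idempotent {A : Type*} [Ring A] (m : ℕ)
    (ψ : (Fin (2 * m + 2) → A) → ℂ)
    (hψ : cyclicLambda (2 * m + 1) ψ = ψ)
    (hφ : cyclicLambda (2 * m + 2) (hochschildB (2 * m + 1) ψ) =
      hochschildB (2 * m + 1) ψ)
    (e : A) (he : e * e = e) :
    hochschildB (2 * m + 1) ψ (fun _ => e) = 0 := by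
  have hc : ψ (fun _ => e) = 0 := by
    have h := congrFun hψ (fun _ => e)
    simp only [cyclicLambda] at h
    rw [Odd.neg_one_pow ⟨m, by ring⟩] at h
    linear_combination -h / 2
  simp only [hochschildB]
  have h1 : ∀ i : Fin (2 * m + 2),
      (fun j : Fin (2 * m + 2) => if (j : ℕ) < (i : ℕ) then (fun _ : Fin (2*m+3) => e) j.castSucc
        else if (j : ℕ) = (i : ℕ) then (fun _ : Fin (2*m+3) => e) j.castSucc * (fun _ : Fin (2*m+3) => e) j.succ
        else (fun _ : Fin (2*m+3) => e) j.succ) = (fun _ => e) := by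
    intro i; funext j; simp [he]
  have h2 : (fun j : Fin (2 * m + 2) => if (j : ℕ) = 0 then
      (fun _ : Fin (2*m+3) => e) (Fin.last (2 * m + 1 + 1)) * (fun _ : Fin (2*m+3) => e) 0
      else (fun _ : Fin (2*m+3) => e) j.castSucc) = (fun _ => e) := by
    funext j; simp [he]
  simp only [h1, h2, hc, mul_zero, add_zero, Finset.sum_const_zero, zero_add]
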